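/- For ℓ ∈ C(L) (L a finite subset of a join-semilattice) and any j, membership j ∈ ℓ↑C(L) is equivalent to: ℓ ≤ j and for all ι ∈ L, ι ≤ j implies ι ≤ ℓ. -/
import Mathlib


theorem upset_membership_iff {Lat : Type*} [SemilatticeSup Lat] [OrderBot Lat]
    [DecidableEq Lat] (L : Finset Lat) (ℓ j : Lat)
    (hℓ : ℓ ∈ L.powerset.image (fun T => T.sup id)) :
    (ℓ ≤ j ∧ ∀ ι ∈ L.powerset.image (fun T => T.sup id), ι ≤ j → ι ≤ ℓ) ↔
      (ℓ ≤ j ∧ ∀ ι ∈ L, ι ≤ j → ι ≤ ℓ) := by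
  constructor
  · rintro ⟨h1, h2⟩
    refine ⟨h1, fun ι hι hj => ?_⟩
    have : ι ∈ L.powerset.image (fun T => T.sup id) := by
      refine Finset.mem_image.2 ⟨{ι}, Finset.mem_powerset.2 (by simpa), by simp⟩
    exact h2 ι this hj
  · rintro ⟨h1, h2⟩
    refine ⟨h1, fun ι hι hj => ?_⟩
    obtain ⟨T, hT, rfl⟩ := Finset.mem_image.1 hι
    exact Finset.sup_le fun x hx =>
      h2 x (Finset.mem_powerset.1 hT hx) (le_trans (Finset.le_sup (f := id) hx) hj)
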